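/- Let Γ be a locally compact group acting continuously on a locally compact Hausdorff space Y such that the action is proper (the map Γ × Y → Y × Y, (γ,y) ↦ (γ·y, y), is proper) and cocompact (there is a compact K ⊆ Y with Γ·K = Y); Γ acts diagonally on Y×Y. Let ℰ be a collection of subsets of Y×Y satisfying: (a) for all A, B ∈ ℰ, A⁻¹ ∈ ℰ and A∘B ∈ ℰ; (b) every subset of an element of ℰ belongs to ℰ; (c) every compact subset of Y×Y belongs to ℰ; (d) Γ-invariance: every E ∈ ℰ is contained in a Γ-invariant element of ℰ; (e) properness: for every E ∈ ℰ, the two coordinate projections from the closure of E in Y×Y to Y are proper maps. Then ℰ is exactly the collection of Γ-relatively compact subsets of Y×Y, i.e. the subsets contained in Γ·C for some compact C ⊆ Y×Y. -/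

import Mathlib

/-- Let `Γ` be a locally compact group acting continuously, properly and
cocompactly on a locally compact Hausdorff space `Y`. Let `ℰ` be a collection of subsets of
`Y × Y` closed under inverses and composition, under taking subsets, containing all compact
subsets, `Γ`-invariant (every member is contained in a `Γ`-invariant member), and proper
(the coordinate projections from the closure of each member are proper maps). Then `ℰ` is
exactly the collection of `Γ`-relatively compact subsets of `Y × Y`. -/
theorem stmt_19 {Γ Y : Type*} [Group Γ] [TopologicalSpace Γ] [IsTopologicalGroup Γ]
    [LocallyCompactSpace Γ] [TopologicalSpace Y] [T2Space Y] [LocallyCompactSpace Y]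
    [MulAction Γ Y] [ContinuousSMul Γ Y]
    (hproper : IsProperMap (fun p : Γ × Y => (p.1 • p.2, p.2)))
    (hcocompact : ∃ K : Set Y, IsCompact K ∧ ∀ y : Y, ∃ γ : Γ, ∃ k ∈ K, y = γ • k)
    (ℰ : Set (Set (Y × Y)))
    (ha : ∀ A ∈ ℰ, ∀ B ∈ ℰ, {p : Y × Y | (p.2, p.1) ∈ A} ∈ ℰ ∧
      {p : Y × Y | ∃ y : Y, (p.1, y) ∈ A ∧ (y, p.2) ∈ B} ∈ ℰ)
    (hb : ∀ A ∈ ℰ, ∀ B ⊆ A, B ∈ ℰ)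
    (hc : ∀ K : Set (Y × Y), IsCompact K → K ∈ ℰ)
    (hd : ∀ E ∈ ℰ, ∃ E' ∈ ℰ, E ⊆ E' ∧
      ∀ (γ : Γ) (y y' : Y), (γ • y, γ • y') ∈ E' ↔ (y, y') ∈ E')
    (he : ∀ E ∈ ℰ,
      IsProperMap (fun p : (closure E : Set (Y × Y)) => (p : Y × Y).1) ∧
      IsProperMap (fun p : (closure E : Set (Y × Y)) => (p : Y × Y).2)) :
    ℰ = {E : Set (Y × Y) | ∃ C : Set (Y × Y), IsCompact C ∧
      E ⊆ ⋃ γ : Γ, (fun p : Y × Y => (γ • p.1, γ • p.2)) '' C} := by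
  ext E
  simp only [Set.mem_setOf_eq]
  constructor
  · intro hE
    obtain ⟨K, hK, hKcov⟩ := hcocompact
    obtain ⟨E', hE'ℰ, hEE', hinv⟩ := hd E hE
    have hprop := (he E' hE'ℰ).1
    have hCcpt : IsCompact ((fun p : (closure E' : Set (Y × Y)) => (p : Y × Y).1) ⁻¹' K) :=
      hprop.isCompact_preimage hK
    refine ⟨Subtype.val '' ((fun p : (closure E' : Set (Y × Y)) => (p : Y × Y).1) ⁻¹' K),
      hCcpt.image continuous_subtype_val, ?_⟩
    intro p hp
    obtain ⟨γ, k, hk, hy⟩ := hKcov p.1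
    have hmem : (γ⁻¹ • p.1, γ⁻¹ • p.2) ∈ E' := by
      have := (hinv γ (γ⁻¹ • p.1) (γ⁻¹ • p.2)).mp
      simp only [smul_inv_smul] at this
      exact this (hEE' hp)
    have hk1 : γ⁻¹ • p.1 ∈ K := by rw [hy, inv_smul_smul]; exact hk
    refine Set.mem_iUnion.2 ⟨γ, (γ⁻¹ • p.1, γ⁻¹ • p.2), ?_, ?_⟩
    · exact ⟨⟨(γ⁻¹ • p.1, γ⁻¹ • p.2), subset_closure hmem⟩, hk1, rfl⟩
    · simp [smul_inv_smul]
  · rintro ⟨C, hC, hEC⟩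
    obtain ⟨E', hE'ℰ, hCE', hinv⟩ := hd C (hc C hC)
    refine hb E' hE'ℰ E fun p hp => ?_
    obtain ⟨_, ⟨γ, rfl⟩, q, hq, rfl⟩ := hEC hp
    exact (hinv γ q.1 q.2).mpr (hCE' hq)
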